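/- arXiv:2407.13237 — 5 statements merged into one kernel-verified Lean document; each statement's English description precedes it below -/
import Mathlib

section
/- If ℓ : Y × Y → ℝ is a loss satisfying ℓ(y₁,y₂) ≤ C‖y₁-y₂‖ᵠ for some q ≥ 1 and C ≥ 0, and u agrees with u* on a finite set X₀ ⊆ X, then for any probability measure ρ on X, the expected loss ∫ ℓ(u*(x), u(x)) dρ(x) ≤ C · (Lip(u*) + Lip(u))ᵠ · ∫ dist(x, X₀)ᵠ dρ(x). -/
open MeasureTheory

/-- If `ℓ(y₁,y₂) ≤ C‖y₁-y₂‖^q` for some `q ≥ 1`, `C ≥ 0`, and `u` agrees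
with `u*` on a finite nonempty set `X₀`, then for a probability measure `ρ`,
`∫ ℓ(u* x, u x) dρ ≤ C * (Lip u* + Lip u)^q * ∫ (dist x X₀)^q dρ`. -/
theorem stmt1 {X Y : Type*} [MetricSpace X] [MeasurableSpace X] [BorelSpace X]
    [NormedAddCommGroup Y]
    (ρ : Measure X) [IsProbabilityMeasure ρ]
    (X₀ : Set X) (hfin : X₀.Finite) (hne : X₀.Nonempty)
    (us u : X → Y) (Ks K : NNReal)
    (hus : LipschitzWith Ks us) (hu : LipschitzWith K u)
    (hagree : ∀ x ∈ X₀, u x = us x)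
    (ℓ : Y × Y → ℝ) (q C : ℝ) (hq : 1 ≤ q) (hC : 0 ≤ C)
    (hℓ : ∀ y₁ y₂ : Y, ℓ (y₁, y₂) ≤ C * ‖y₁ - y₂‖ ^ q)
    (hint₁ : Integrable (fun x => ℓ (us x, u x)) ρ)
    (hint₂ : Integrable (fun x => (Metric.infDist x X₀) ^ q) ρ) :
    ∫ x, ℓ (us x, u x) ∂ρ
      ≤ C * ((Ks : ℝ) + (K : ℝ)) ^ q * ∫ x, (Metric.infDist x X₀) ^ q ∂ρ := by
  have key : ∀ x : X, ℓ (us x, u x)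
      ≤ C * ((Ks : ℝ) + (K : ℝ)) ^ q * (Metric.infDist x X₀) ^ q := by
    intro x
    obtain ⟨x₀, hx₀, hdist⟩ := hfin.isCompact.exists_infDist_eq_dist hne x
    have hbound : ‖us x - u x‖ ≤ ((Ks : ℝ) + (K : ℝ)) * Metric.infDist x X₀ := by
      have h1 : ‖us x - us x₀‖ ≤ (Ks : ℝ) * dist x x₀ := by
        have := hus.dist_le_mul x x₀
        rwa [dist_eq_norm] at this
      have h2 : ‖u x₀ - u x‖ ≤ (K : ℝ) * dist x x₀ := by
        have := hu.dist_le_mul x x₀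
        rwa [dist_eq_norm'] at this
      calc ‖us x - u x‖ = ‖(us x - us x₀) + (u x₀ - u x)‖ := by
            rw [hagree x₀ hx₀]; congr 1; abel
          _ ≤ ‖us x - us x₀‖ + ‖u x₀ - u x‖ := norm_add_le _ _
          _ ≤ (Ks : ℝ) * dist x x₀ + (K : ℝ) * dist x x₀ := add_le_add h1 h2
          _ = ((Ks : ℝ) + (K : ℝ)) * Metric.infDist x X₀ := by rw [hdist]; ring
    calc ℓ (us x, u x) ≤ C * ‖us x - u x‖ ^ q := hℓ _ _
      _ ≤ C * (((Ks : ℝ) + (K : ℝ)) * Metric.infDist x X₀) ^ q := by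
          apply mul_le_mul_of_nonneg_left _ hC
          exact Real.rpow_le_rpow (norm_nonneg _) hbound (by linarith) |>.trans_eq rfl
      _ = C * ((Ks : ℝ) + (K : ℝ)) ^ q * (Metric.infDist x X₀) ^ q := by
          rw [Real.mul_rpow (by positivity) (Metric.infDist_nonneg), mul_assoc]
  calc ∫ x, ℓ (us x, u x) ∂ρ
      ≤ ∫ x, C * ((Ks : ℝ) + (K : ℝ)) ^ q * (Metric.infDist x X₀) ^ q ∂ρ :=
        integral_mono hint₁ (hint₂.const_mul _) key
    _ = C * ((Ks : ℝ) + (K : ℝ)) ^ q * ∫ x, (Metric.infDist x X₀) ^ q ∂ρ :=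
        integral_const_mul _ _
end

section
/- If g : S → S is K₂-Lipschitz with γK₂ < 1 and r : S → ℝ is K₁-Lipschitz and bounded, then the infinite-horizon value function V(s) = Σ_{t=0}^{∞} γᵗ r(gᵗ(s)) is well-defined and is (K₁/(1 - γK₂))-Lipschitz. -/
/-- If `g` is `K₂`-Lipschitz with `γ K₂ < 1` and `r` is `K₁`-Lipschitz and
bounded, then the infinite-horizon value `V s = ∑_{t=0}^∞ γ^t r (g^[t] s)` is
well-defined (the series is summable) and `V` is `K₁/(1 - γ K₂)`-Lipschitz. -/
theorem stmt5 {S : Type*} [MetricSpace S]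
    (r : S → ℝ) (g : S → S) (K₁ K₂ γ : ℝ) (hK₁ : 0 ≤ K₁) (hK₂ : 0 ≤ K₂)
    (hγ : 0 ≤ γ) (hγ1 : γ < 1) (hγK : γ * K₂ < 1)
    (hrb : ∃ M : ℝ, ∀ s, |r s| ≤ M)
    (hr : ∀ s s' : S, |r s - r s'| ≤ K₁ * dist s s')
    (hg : ∀ s s' : S, dist (g s) (g s') ≤ K₂ * dist s s')
    (V : S → ℝ) (hV : ∀ s, V s = ∑' t : ℕ, γ ^ t * r (g^[t] s)) :
    (∀ s : S, Summable fun t : ℕ => γ ^ t * r (g^[t] s))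
    ∧ (∀ s₁ s₂ : S, |V s₁ - V s₂| ≤ K₁ / (1 - γ * K₂) * dist s₁ s₂) := by
  obtain ⟨M, hM⟩ := hrb
  have hsum : ∀ s : S, Summable fun t : ℕ => γ ^ t * r (g^[t] s) := by
    intro s
    apply Summable.of_norm
    have hle : ∀ t : ℕ, ‖γ ^ t * r (g^[t] s)‖ ≤ M * γ ^ t := by
      intro t
      rw [Real.norm_eq_abs, abs_mul, abs_pow, abs_of_nonneg hγ]
      calc γ ^ t * |r (g^[t] s)| ≤ γ ^ t * M :=
            mul_le_mul_of_nonneg_left (hM _) (pow_nonneg hγ t)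
        _ = M * γ ^ t := mul_comm _ _
    exact Summable.of_nonneg_of_le (fun t => norm_nonneg _) hle
      ((summable_geometric_of_lt_one hγ hγ1).mul_left M)
  refine ⟨hsum, fun s₁ s₂ => ?_⟩
  have hiter : ∀ t : ℕ, dist (g^[t] s₁) (g^[t] s₂) ≤ K₂ ^ t * dist s₁ s₂ := by
    intro t
    induction t with
    | zero => simp
    | succ n ih =>
      rw [Function.iterate_succ_apply', Function.iterate_succ_apply']
      calc dist (g (g^[n] s₁)) (g (g^[n] s₂)) ≤ K₂ * dist (g^[n] s₁) (g^[n] s₂) := hg _ _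
        _ ≤ K₂ * (K₂ ^ n * dist s₁ s₂) := mul_le_mul_of_nonneg_left ih hK₂
        _ = K₂ ^ (n + 1) * dist s₁ s₂ := by ring
  have hγK₂ : 0 ≤ γ * K₂ := mul_nonneg hγ hK₂
  have hsumG : Summable fun t : ℕ => K₁ * dist s₁ s₂ * (γ * K₂) ^ t :=
    (summable_geometric_of_lt_one hγK₂ hγK).mul_left _
  have hbound : ∀ t : ℕ,
      ‖γ ^ t * r (g^[t] s₁) - γ ^ t * r (g^[t] s₂)‖ ≤ K₁ * dist s₁ s₂ * (γ * K₂) ^ t := by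
    intro t
    rw [← mul_sub, Real.norm_eq_abs, abs_mul, abs_pow, abs_of_nonneg hγ]
    calc γ ^ t * |r (g^[t] s₁) - r (g^[t] s₂)|
        ≤ γ ^ t * (K₁ * dist (g^[t] s₁) (g^[t] s₂)) :=
          mul_le_mul_of_nonneg_left (hr _ _) (pow_nonneg hγ t)
      _ ≤ γ ^ t * (K₁ * (K₂ ^ t * dist s₁ s₂)) :=
          mul_le_mul_of_nonneg_left
            (mul_le_mul_of_nonneg_left (hiter t) hK₁) (pow_nonneg hγ t)
      _ = K₁ * dist s₁ s₂ * (γ * K₂) ^ t := by rw [mul_pow]; ring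
  have key : |V s₁ - V s₂| ≤ ∑' t : ℕ, K₁ * dist s₁ s₂ * (γ * K₂) ^ t := by
    rw [hV s₁, hV s₂, ← Summable.tsum_sub (hsum s₁) (hsum s₂)]
    exact tsum_of_norm_bounded hsumG.hasSum hbound
  calc |V s₁ - V s₂| ≤ ∑' t : ℕ, K₁ * dist s₁ s₂ * (γ * K₂) ^ t := key
    _ = K₁ * dist s₁ s₂ * (1 - γ * K₂)⁻¹ := by
        rw [tsum_mul_left, tsum_geometric_of_lt_one hγK₂ hγK]
    _ = K₁ / (1 - γ * K₂) * dist s₁ s₂ := by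
        field_simp
end

section
/- In a Markov decision process with bellman operators T^π V = r + γP^π V for policies π, if V* = T^{π*} V* is the optimal value, V^{πg} = T^{πg} V^{πg}, V is any value function, and πg is the greedy policy with respect to V (i.e., T^{πg} V = TV ≥ T^{π*} V pointwise), then pointwise V* - V^{πg} ≤ [(I - γP^{π*})⁻¹ + (I - γP^{πg})⁻¹] |TV - V|, where |·| is applied componentwise. -/
open Matrix

attribute [local instance] Matrix.linftyOpNormedRing Matrix.linftyOpNormedAlgebra

namespace Stmt7Aux

variable {S : Type*} [Fintype S] [DecidableEq S]

/-- entry extraction as a linear map -/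
def entryLM (i j : S) : Matrix S S ℝ →ₗ[ℝ] ℝ where
  toFun A := A i j
  map_add' _ _ := rfl
  map_smul' _ _ := rfl

lemma norm_le_one {P : Matrix S S ℝ} (hnn : ∀ i j, 0 ≤ P i j)
    (hrow : ∀ i, ∑ j, P i j = 1) : ‖P‖ ≤ 1 := by
  have h : ‖P‖₊ ≤ 1 := by
    rw [Matrix.linfty_opNNNorm_def]
    refine Finset.sup_le fun i _ => ?_
    have hco : ((∑ j, ‖P i j‖₊ : NNReal) : ℝ) = 1 := by
      push_cast
      simp only [coe_nnnorm, Real.norm_eq_abs]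
      calc ∑ j, |P i j| = ∑ j, P i j :=
            Finset.sum_congr rfl fun j _ => abs_of_nonneg (hnn i j)
        _ = 1 := hrow i
    have : (∑ j, ‖P i j‖₊ : NNReal) = 1 := by exact_mod_cast hco
    exact le_of_eq this
  calc ‖P‖ = ((‖P‖₊ : NNReal) : ℝ) := rfl
    _ ≤ 1 := by exact_mod_cast h

lemma pow_entries_nonneg {x : Matrix S S ℝ} (h : ∀ i j, 0 ≤ x i j) :
    ∀ n i j, 0 ≤ (x ^ n) i j := by
  intro n
  induction n with
  | zero =>
      intro i j
      rw [pow_zero]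
      by_cases hij : i = j <;> simp [Matrix.one_apply, hij]
  | succ n ih =>
      intro i j
      rw [pow_succ, Matrix.mul_apply]
      exact Finset.sum_nonneg fun k _ => mul_nonneg (ih i k) (h k j)

lemma key {γ : ℝ} (hγ : 0 ≤ γ) (hγ1 : γ < 1) {P : Matrix S S ℝ}
    (hnn : ∀ i j, 0 ≤ P i j) (hrow : ∀ i, ∑ j, P i j = 1)
    (u w : S → ℝ) (h : ∀ s, u s - γ * P.mulVec u s ≤ w s) :
    ∀ s, u s ≤ (1 - γ • P)⁻¹.mulVec w s := by
  set x : Matrix S S ℝ := γ • P with hx_def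
  have hx : ‖x‖ < 1 := by
    calc ‖x‖ = ‖γ‖ * ‖P‖ := norm_smul γ P
      _ ≤ γ * 1 := by
          apply mul_le_mul (le_of_eq (by rw [Real.norm_eq_abs, abs_of_nonneg hγ]))
            (norm_le_one hnn hrow) (norm_nonneg _) hγ
      _ = γ := mul_one γ
      _ < 1 := hγ1
  have hxnn : ∀ i j, 0 ≤ x i j := fun i j => by
    simpa [hx_def] using mul_nonneg hγ (hnn i j)
  set B : Matrix S S ℝ := ∑' n : ℕ, x ^ n with hB_def
  have hsum : Summable (fun n : ℕ => x ^ n) := summable_geometric_of_norm_lt_one hx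
  have hMB : (1 - x) * B = 1 := mul_neg_geom_series x hx
  have hBM : B * (1 - x) = 1 := geom_series_mul_neg x hx
  have hinv : (1 - x)⁻¹ = B := Matrix.inv_eq_right_inv hMB
  have hBnn : ∀ i j, 0 ≤ B i j := by
    intro i j
    have hmap : B i j = ∑' n : ℕ, (x ^ n) i j := by
      have := ((entryLM i j).toContinuousLinearMap).map_tsum hsum
      exact this
    rw [hmap]
    exact tsum_nonneg fun n => pow_entries_nonneg hxnn n i j
  have huMu : ∀ s, (1 - x).mulVec u s = u s - γ * P.mulVec u s := by
    intro s
    rw [Matrix.sub_mulVec, Matrix.one_mulVec]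
    simp [hx_def, Matrix.smul_mulVec]
  have hrecover : ∀ s, u s = B.mulVec ((1 - x).mulVec u) s := by
    intro s
    rw [Matrix.mulVec_mulVec, hBM, Matrix.one_mulVec]
  intro s
  rw [hinv]
  calc u s = B.mulVec ((1 - x).mulVec u) s := hrecover s
    _ ≤ B.mulVec w s := by
        have hle : ∀ j, ∑ k, (1 - x) j k * u k ≤ w j := by
          intro j
          have hj := huMu j
          simp only [Matrix.mulVec, dotProduct] at hj
          rw [hj]; exact h j
        simp only [Matrix.mulVec, dotProduct]
        exact Finset.sum_le_sum fun j _ => mul_le_mul_of_nonneg_left (hle j) (hBnn s j)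

end Stmt7Aux

/-- For a finite-state MDP with Bellman operators `T^π V = r + γ P^π V`,
if `V*` is the fixed point of `T^{π*}`, `V^{πg}` the fixed point of `T^{πg}` where `πg`
is greedy w.r.t. `V` (so `TV = T^{πg} V ≥ T^{π*} V`), then componentwise
`V* - V^{πg} ≤ [(I - γP^{π*})⁻¹ + (I - γP^{πg})⁻¹] |TV - V|`. -/
theorem stmt7 {S : Type*} [Fintype S] [DecidableEq S]
    (γ : ℝ) (hγ : 0 ≤ γ) (hγ1 : γ < 1)
    (Pstar Pg : Matrix S S ℝ)
    (hPs_nonneg : ∀ i j, 0 ≤ Pstar i j) (hPs_row : ∀ i, ∑ j, Pstar i j = 1)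
    (hPg_nonneg : ∀ i j, 0 ≤ Pg i j) (hPg_row : ∀ i, ∑ j, Pg i j = 1)
    (r V Vstar Vg TV : S → ℝ)
    (hVstar : ∀ s, Vstar s = r s + γ * Pstar.mulVec Vstar s)
    (hVg : ∀ s, Vg s = r s + γ * Pg.mulVec Vg s)
    (hTV : ∀ s, TV s = r s + γ * Pg.mulVec V s)
    (hgreedy : ∀ s, r s + γ * Pstar.mulVec V s ≤ TV s) :
    ∀ s, Vstar s - Vg s
      ≤ ((1 - γ • Pstar)⁻¹ + (1 - γ • Pg)⁻¹).mulVec (fun s' => |TV s' - V s'|) s := by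
  set ε : S → ℝ := fun s' => |TV s' - V s'| with hε
  have h1 : ∀ s, Vstar s - V s ≤ (1 - γ • Pstar)⁻¹.mulVec ε s := by
    apply Stmt7Aux.key hγ hγ1 hPs_nonneg hPs_row
    intro s
    have hsub : Pstar.mulVec (fun t => Vstar t - V t) s
        = Pstar.mulVec Vstar s - Pstar.mulVec V s := by
      have : (fun t => Vstar t - V t) = Vstar - V := rfl
      rw [this, Matrix.mulVec_sub]; rfl
    rw [hsub]
    have h1a := hVstar s
    have h1b := hgreedy s
    have h1c : TV s - V s ≤ ε s := le_abs_self _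
    linarith
  have h2 : ∀ s, V s - Vg s ≤ (1 - γ • Pg)⁻¹.mulVec ε s := by
    apply Stmt7Aux.key hγ hγ1 hPg_nonneg hPg_row
    intro s
    have hsub : Pg.mulVec (fun t => V t - Vg t) s
        = Pg.mulVec V s - Pg.mulVec Vg s := by
      have : (fun t => V t - Vg t) = V - Vg := rfl
      rw [this, Matrix.mulVec_sub]; rfl
    rw [hsub]
    have h2a := hVg s
    have h2b := hTV s
    have h2c : V s - TV s ≤ ε s :=
      (le_abs_self _).trans (le_of_eq (abs_sub_comm _ _))
    linarith
  intro s
  have := add_le_add (h1 s) (h2 s)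
  rw [Matrix.add_mulVec]
  simpa using this
end

section
/- Suppose V* - V^{πg} ≤ (2/(1-γ))·A·|TV - V| componentwise, where A is row-stochastic and satisfies v A ≤ C₁(v,u)·u componentwise for probability distributions v, u and constant C₁(v,u). Then for q ≥ 1, ‖V* - V^{πg}‖_{q,v} ≤ (2/(1-γ)) · C₁(v,u)^{1/q} · ‖TV - V‖_{q,u}, where ‖W‖_{q,ρ} = (Σ_s ρ(s)|W(s)|^q)^{1/q}. -/
/-- If `V* - V^{πg} ≤ (2/(1-γ)) A |TV - V|` componentwise with `A`
row-stochastic and `v A ≤ C₁(v,u) u`, then for `q ≥ 1`,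
`‖V* - V^{πg}‖_{q,v} ≤ (2/(1-γ)) C₁^{1/q} ‖TV - V‖_{q,u}`. -/
theorem stmt11 {S : Type*} [Fintype S]
    (γ : ℝ) (hγ : 0 ≤ γ) (hγ1 : γ < 1)
    (A : Matrix S S ℝ)
    (hA_nonneg : ∀ i j, 0 ≤ A i j) (hA_row : ∀ i, ∑ j, A i j = 1)
    (v u : S → ℝ)
    (hv_nonneg : ∀ s, 0 ≤ v s) (hv_sum : ∑ s, v s = 1)
    (hu_nonneg : ∀ s, 0 ≤ u s) (hu_sum : ∑ s, u s = 1)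
    (C₁ : ℝ) (hC₁ : 0 ≤ C₁)
    (hvA : ∀ s, ∑ s', v s' * A s' s ≤ C₁ * u s)
    (Vstar Vg TV V : S → ℝ)
    (hge : ∀ s, Vg s ≤ Vstar s)
    (hbound : ∀ s, Vstar s - Vg s
        ≤ (2 / (1 - γ)) * A.mulVec (fun s' => |TV s' - V s'|) s)
    (q : ℝ) (hq : 1 ≤ q) :
    (∑ s, v s * |Vstar s - Vg s| ^ q) ^ (1 / q)
      ≤ (2 / (1 - γ)) * C₁ ^ (1 / q) * (∑ s, u s * |TV s - V s| ^ q) ^ (1 / q) := by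
  set c : ℝ := 2 / (1 - γ) with hc_def
  have hc : 0 ≤ c := div_nonneg (by norm_num) (by linarith)
  have hq0 : 0 < q := lt_of_lt_of_le one_pos hq
  set e : S → ℝ := fun s' => |TV s' - V s'| with he_def
  have he_nonneg : ∀ s, 0 ≤ e s := fun s => abs_nonneg _
  -- pointwise bound  |Δ s|^q ≤ c^q * ∑ j, A s j * (e j)^q
  have hpt : ∀ s, |Vstar s - Vg s| ^ q ≤ c ^ q * ∑ j, A s j * (e j) ^ q := by
    intro s
    have hmv : A.mulVec e s = ∑ j, A s j * e j := by
      simp [Matrix.mulVec, dotProduct]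
    have hAe_nonneg : 0 ≤ ∑ j, A s j * e j :=
      Finset.sum_nonneg fun j _ => mul_nonneg (hA_nonneg s j) (he_nonneg j)
    have h1 : |Vstar s - Vg s| ≤ c * ∑ j, A s j * e j := by
      rw [abs_of_nonneg (sub_nonneg.2 (hge s))]
      calc Vstar s - Vg s ≤ c * A.mulVec e s := hbound s
        _ = c * ∑ j, A s j * e j := by rw [hmv]
    have h2 : |Vstar s - Vg s| ^ q ≤ (c * ∑ j, A s j * e j) ^ q :=
      Real.rpow_le_rpow (abs_nonneg _) h1 hq0.le
    have h3 : (c * ∑ j, A s j * e j) ^ q = c ^ q * (∑ j, A s j * e j) ^ q :=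
      Real.mul_rpow hc hAe_nonneg
    have h4 : (∑ j, A s j * e j) ^ q ≤ ∑ j, A s j * (e j) ^ q :=
      Real.rpow_arith_mean_le_arith_mean_rpow Finset.univ (A s) e
        (fun j _ => hA_nonneg s j) (hA_row s) (fun j _ => he_nonneg j) hq
    calc |Vstar s - Vg s| ^ q ≤ c ^ q * (∑ j, A s j * e j) ^ q := by rw [← h3]; exact h2
      _ ≤ c ^ q * ∑ j, A s j * (e j) ^ q :=
        mul_le_mul_of_nonneg_left h4 (Real.rpow_nonneg hc q)
  -- sum bound
  have hsum : ∑ s, v s * |Vstar s - Vg s| ^ q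
      ≤ c ^ q * C₁ * ∑ j, u j * (e j) ^ q := by
    calc ∑ s, v s * |Vstar s - Vg s| ^ q
        ≤ ∑ s, v s * (c ^ q * ∑ j, A s j * (e j) ^ q) :=
          Finset.sum_le_sum fun s _ =>
            mul_le_mul_of_nonneg_left (hpt s) (hv_nonneg s)
      _ = c ^ q * ∑ j, (∑ s, v s * A s j) * (e j) ^ q := by
          simp_rw [Finset.mul_sum]
          rw [Finset.sum_comm]
          refine Finset.sum_congr rfl fun j _ => ?_
          rw [Finset.sum_mul, Finset.mul_sum]
          refine Finset.sum_congr rfl fun s _ => by ring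
      _ ≤ c ^ q * ∑ j, (C₁ * u j) * (e j) ^ q := by
          refine mul_le_mul_of_nonneg_left (Finset.sum_le_sum fun j _ => ?_)
            (Real.rpow_nonneg hc q)
          exact mul_le_mul_of_nonneg_right (hvA j) (Real.rpow_nonneg (he_nonneg j) q)
      _ = c ^ q * C₁ * ∑ j, u j * (e j) ^ q := by
          simp_rw [Finset.mul_sum]
          refine Finset.sum_congr rfl fun j _ => by ring
  have hRHS_nonneg : 0 ≤ ∑ j, u j * (e j) ^ q :=
    Finset.sum_nonneg fun j _ => mul_nonneg (hu_nonneg j)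
      (Real.rpow_nonneg (he_nonneg j) q)
  have hLHS_nonneg : 0 ≤ ∑ s, v s * |Vstar s - Vg s| ^ q :=
    Finset.sum_nonneg fun s _ => mul_nonneg (hv_nonneg s)
      (Real.rpow_nonneg (abs_nonneg _) q)
  have hmono := Real.rpow_le_rpow hLHS_nonneg hsum (by positivity : (0:ℝ) ≤ 1 / q)
  calc (∑ s, v s * |Vstar s - Vg s| ^ q) ^ (1 / q)
      ≤ (c ^ q * C₁ * ∑ j, u j * (e j) ^ q) ^ (1 / q) := hmono
    _ = c * C₁ ^ (1 / q) * (∑ j, u j * (e j) ^ q) ^ (1 / q) := by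
        rw [Real.mul_rpow (mul_nonneg (Real.rpow_nonneg hc q) hC₁) hRHS_nonneg,
          Real.mul_rpow (Real.rpow_nonneg hc q) hC₁,
          ← Real.rpow_mul hc, mul_one_div, div_self hq0.ne', Real.rpow_one]
end

section
/- Composition of the swap lemma with the projection bound: under the assumptions that f permutes X₀ and fixes X \ X₀, that u₁* = u₀*∘f⁻¹ has Lip(u₁*) ≤ Lip(u₀*), and that minimizers u₀, u₁ of the empirical losses interpolate their data and satisfy Lip(u₀) = Lip(u₁), one has sup over minimizers u₁ of E_{x∼ρ_f}‖u₁* - u₁‖ ≤ sup over minimizers u₀ of E_{x∼ρ}‖u₀* - u₀‖, where each supremum bound equals (Lip(u_i*) + Lip(u_i))·E[dist(x, X₀)]. -/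
open MeasureTheory

lemma stmt18_ptwise {X Y : Type*} [MetricSpace X] [NormedAddCommGroup Y]
    (X₀ : Set X) (hfin : X₀.Finite) (hne : X₀.Nonempty)
    (us u : X → Y) (Ls L : NNReal)
    (hus : LipschitzWith Ls us) (hu : LipschitzWith L u)
    (hint : ∀ x ∈ X₀, u x = us x) (x : X) :
    ‖us x - u x‖ ≤ ((Ls : ℝ) + (L : ℝ)) * Metric.infDist x X₀ := by
  obtain ⟨y, hy, hdy⟩ := hfin.isCompact.exists_infDist_eq_dist hne x
  rw [hdy]
  calc ‖us x - u x‖ = ‖(us x - us y) + (u y - u x)‖ := by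
        rw [hint y hy]; congr 1; abel
    _ ≤ ‖us x - us y‖ + ‖u y - u x‖ := norm_add_le _ _
    _ ≤ (Ls : ℝ) * dist x y + (L : ℝ) * dist y x := by
        gcongr
        · simpa [dist_eq_norm] using hus.dist_le_mul x y
        · simpa [dist_eq_norm] using hu.dist_le_mul y x
    _ = ((Ls : ℝ) + (L : ℝ)) * dist x y := by rw [dist_comm y x]; ring

/-- combining the swap lemma with the projection bound. If `f` permutes
the finite set `X₀` and fixes its complement, `u₁* = u₀* ∘ f⁻¹` with
`Lip(u₁*) ≤ Lip(u₀*)`, and minimizers interpolate their data with `Lip(u₀) = Lip(u₁) = L`,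
then every minimizer `u₁` satisfies the tight bound
`E_{ρ_f}‖u₁* - u₁‖ ≤ (Lip(u₁*) + L)·E_ρ[dist(x,X₀)]`, every minimizer `u₀` satisfies
`E_ρ‖u₀* - u₀‖ ≤ (Lip(u₀*) + L)·E_ρ[dist(x,X₀)]`, and the former bound is smaller,
whence `sup E_{ρ_f}‖u₁* - u₁‖ ≤ sup E_ρ‖u₀* - u₀‖`. -/
theorem stmt18 {X Y : Type*} [MetricSpace X] [MeasurableSpace X] [BorelSpace X]
    [SecondCountableTopology X] [NormedAddCommGroup Y]
    (ρ : Measure X) [IsProbabilityMeasure ρ]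
    (X₀ : Set X) (hfin : X₀.Finite) (hne : X₀.Nonempty)
    (f : X ≃ X) (hmeas : Measurable f)
    (himg : f '' X₀ = X₀) (hfix : ∀ x ∉ X₀, f x = x)
    (u₀s u₁s : X → Y) (L₀s L₁s L : NNReal)
    (hu₀s : LipschitzWith L₀s u₀s)
    (hu₁s_def : u₁s = u₀s ∘ f.symm) (hu₁s : LipschitzWith L₁s u₁s)
    (hLipLe : L₁s ≤ L₀s)
    (hInt : Integrable (fun x => Metric.infDist x X₀) ρ) :
    (∀ u₁ : X → Y, LipschitzWith L u₁ → (∀ x ∈ X₀, u₁ x = u₁s x) →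
        ∫ x, ‖u₁s x - u₁ x‖ ∂(ρ.map f)
          ≤ ((L₁s : ℝ) + (L : ℝ)) * ∫ x, Metric.infDist x X₀ ∂ρ)
    ∧ (∀ u₀ : X → Y, LipschitzWith L u₀ → (∀ x ∈ X₀, u₀ x = u₀s x) →
        ∫ x, ‖u₀s x - u₀ x‖ ∂ρ
          ≤ ((L₀s : ℝ) + (L : ℝ)) * ∫ x, Metric.infDist x X₀ ∂ρ)
    ∧ ((L₁s : ℝ) + (L : ℝ)) * ∫ x, Metric.infDist x X₀ ∂ρ
        ≤ ((L₀s : ℝ) + (L : ℝ)) * ∫ x, Metric.infDist x X₀ ∂ρ := by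
  have hfA : ∀ x, Metric.infDist (f x) X₀ = Metric.infDist x X₀ := by
    intro x
    by_cases hx : x ∈ X₀
    · have hfx : f x ∈ X₀ := himg ▸ Set.mem_image_of_mem f hx
      rw [Metric.infDist_zero_of_mem hfx, Metric.infDist_zero_of_mem hx]
    · rw [hfix x hx]
  have hIntMap : Integrable (fun x => Metric.infDist x X₀) (ρ.map f) := by
    rw [integrable_map_measure (by fun_prop) hmeas.aemeasurable]
    have h : ((fun x => Metric.infDist x X₀) ∘ ⇑f) = fun x => Metric.infDist x X₀ :=
      funext fun x => hfA x
    rw [h]; exact hInt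
  have hEqMap : ∫ x, Metric.infDist x X₀ ∂(ρ.map f) = ∫ x, Metric.infDist x X₀ ∂ρ := by
    rw [integral_map hmeas.aemeasurable (by fun_prop)]
    simp [hfA]
  have hnonneg : 0 ≤ ∫ x, Metric.infDist x X₀ ∂ρ :=
    integral_nonneg fun x => Metric.infDist_nonneg
  refine ⟨?_, ?_, ?_⟩
  · intro u₁ hu₁ hi
    calc ∫ x, ‖u₁s x - u₁ x‖ ∂(ρ.map f)
        ≤ ∫ x, ((L₁s : ℝ) + (L : ℝ)) * Metric.infDist x X₀ ∂(ρ.map f) := by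
          refine integral_mono_of_nonneg (Filter.Eventually.of_forall fun x => norm_nonneg _)
            (hIntMap.const_mul _) (Filter.Eventually.of_forall fun x => ?_)
          exact stmt18_ptwise X₀ hfin hne u₁s u₁ L₁s L hu₁s hu₁
            (fun x hx => hi x hx) x
      _ = ((L₁s : ℝ) + (L : ℝ)) * ∫ x, Metric.infDist x X₀ ∂(ρ.map f) :=
          integral_const_mul _ _
      _ = ((L₁s : ℝ) + (L : ℝ)) * ∫ x, Metric.infDist x X₀ ∂ρ := by rw [hEqMap]
  · intro u₀ hu₀ hi
    calc ∫ x, ‖u₀s x - u₀ x‖ ∂ρ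
        ≤ ∫ x, ((L₀s : ℝ) + (L : ℝ)) * Metric.infDist x X₀ ∂ρ := by
          refine integral_mono_of_nonneg (Filter.Eventually.of_forall fun x => norm_nonneg _)
            (hInt.const_mul _) (Filter.Eventually.of_forall fun x => ?_)
          exact stmt18_ptwise X₀ hfin hne u₀s u₀ L₀s L hu₀s hu₀
            (fun x hx => hi x hx) x
      _ = ((L₀s : ℝ) + (L : ℝ)) * ∫ x, Metric.infDist x X₀ ∂ρ := integral_const_mul _ _
  · gcongr
end
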